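/- The map μ from the nilpotent cone of 3×3 complex matrices to ℂ⁴, N ↦ (f_{3,1}(N), f₁(N), f₂(N), det₁(N)) (with f_{3,1}, f₁, f₂, det₁ as defined from matrix entries), has image contained in the variety {(s, t, u, v) ∈ ℂ⁴ : t·u = v³}, and the restriction of μ to the set of N with N_{2,1} ≠ 0 and N_{3,2} ≠ 0 is surjective onto {(s,t,u,v) : tu = v³, t ≠ 0, u ≠ 0}. -/

import Mathlib

noncomputable def det1 (N : Matrix (Fin 3) (Fin 3) ℂ) : ℂ :=
  N 1 0 * N 2 1 - N 1 1 * N 2 0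

noncomputable def f31 (N : Matrix (Fin 3) (Fin 3) ℂ) : ℂ := N 2 0

noncomputable def f1 (N : Matrix (Fin 3) (Fin 3) ℂ) : ℂ :=
  N 1 0 * det1 N + N 2 0 * (N 1 0 * N 2 2 - N 2 0 * N 1 2)

noncomputable def f2 (N : Matrix (Fin 3) (Fin 3) ℂ) : ℂ :=
  N 2 1 * det1 N + N 2 0 * (N 0 0 * N 2 1 - N 0 1 * N 2 0)

/-- the image of μ = (f_{3,1}, f₁, f₂, det₁) lies in the variety
{t·u = v³}, and the restriction of μ to matrices with nonzero subdiagonal is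
surjective onto the locus t ≠ 0, u ≠ 0 of that variety. -/
theorem stmt_12 :
    (∀ N : Matrix (Fin 3) (Fin 3) ℂ, N ^ 3 = 0 →
      f1 N * f2 N = (det1 N) ^ 3) ∧
    (∀ s t u v : ℂ, t * u = v ^ 3 → t ≠ 0 → u ≠ 0 →
      ∃ N : Matrix (Fin 3) (Fin 3) ℂ, N ^ 3 = 0 ∧ N 1 0 ≠ 0 ∧ N 2 1 ≠ 0 ∧
        f31 N = s ∧ f1 N = t ∧ f2 N = u ∧ det1 N = v) := by
  constructor
  · intro N hN
    have hnil : IsNilpotent N := ⟨3, hN⟩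
    -- trace N = 0
    have h1 : Matrix.trace N = 0 :=
      (Matrix.isNilpotent_trace_of_isNilpotent hnil).eq_zero
    -- trace (N^2) = 0
    have hnil2 : IsNilpotent (N ^ 2) := ⟨3, by
      rw [← pow_mul]
      norm_num
      rw [show (6 : ℕ) = 3 + 3 from rfl, pow_add, hN, zero_mul]⟩
    have h2 : Matrix.trace (N ^ 2) = 0 :=
      (Matrix.isNilpotent_trace_of_isNilpotent hnil2).eq_zero
    -- det N = 0
    have h3 : N.det = 0 := by
      have : N.det ^ 3 = 0 := by
        rw [← Matrix.det_pow, hN, Matrix.det_zero]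
      exact pow_eq_zero_iff (by norm_num) |>.mp this
    have e1 : N 0 0 + N 1 1 + N 2 2 = 0 := by
      simpa [Matrix.trace, Matrix.diag, Fin.sum_univ_three] using h1
    have e2 : (N 0 0 * N 0 0 + N 0 1 * N 1 0 + N 0 2 * N 2 0)
        + (N 1 0 * N 0 1 + N 1 1 * N 1 1 + N 1 2 * N 2 1)
        + (N 2 0 * N 0 2 + N 2 1 * N 1 2 + N 2 2 * N 2 2) = 0 := by
      simpa [Matrix.trace, Matrix.diag, pow_two, Matrix.mul_apply,
        Fin.sum_univ_three] using h2
    have e3 : N 0 0 * (N 1 1 * N 2 2 - N 1 2 * N 2 1)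
        - N 0 1 * (N 1 0 * N 2 2 - N 1 2 * N 2 0)
        + N 0 2 * (N 1 0 * N 2 1 - N 1 1 * N 2 0) = 0 := by
      rw [Matrix.det_fin_three] at h3; linear_combination h3
    simp only [f1, f2, det1]
    linear_combination
      ((-1/2 : ℂ) * N 1 1 * N 2 0 * N 2 0 * N 2 0 * N 2 2
        + (1/2 : ℂ) * N 1 1 * N 1 1 * N 2 0 * N 2 0 * N 2 0
        + (1/2 : ℂ) * N 1 0 * N 2 0 * N 2 0 * N 2 1 * N 2 2
        + (-3/2 : ℂ) * N 1 0 * N 1 1 * N 2 0 * N 2 0 * N 2 1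
        + N 1 0 * N 1 0 * N 2 0 * N 2 1 * N 2 1
        + (-1/2 : ℂ) * N 0 0 * N 1 1 * N 2 0 * N 2 0 * N 2 0
        + (1/2 : ℂ) * N 0 0 * N 1 0 * N 2 0 * N 2 0 * N 2 1) * e1
      + ((1/2 : ℂ) * N 1 1 * N 2 0 * N 2 0 * N 2 0
        + (-1/2 : ℂ) * N 1 0 * N 2 0 * N 2 0 * N 2 1) * e2
      + (N 2 0 * N 2 0 * N 2 0) * e3
  · intro s t u v htu ht hu
    have hv : v ≠ 0 := by
      intro h; rw [h] at htu; simp at htu; tauto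
    refine ⟨!![0, 0, 0; t / v, 0, 0; s, u / v, 0], ?_, ?_, ?_, ?_, ?_, ?_, ?_⟩
    · ext i j
      fin_cases i <;> fin_cases j <;>
        simp [pow_succ, Matrix.mul_apply, Fin.sum_univ_three]
    · simpa using div_ne_zero ht hv
    · simpa using div_ne_zero hu hv
    · simp [f31]
    · have hab : t / v * (u / v) = v := by field_simp; linear_combination htu
      simp only [f1, det1]
      norm_num [Matrix.vecHead, Matrix.vecTail]
      simp only [Matrix.cons_val_two, Matrix.cons_val_succ', Matrix.head_cons, Matrix.tail_cons, Matrix.vecHead, Matrix.cons_val_zero, mul_zero, sub_zero, add_zero]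
      rw [hab]
      exact div_mul_cancel₀ t hv
    · have hab : t / v * (u / v) = v := by field_simp; linear_combination htu
      simp only [f2, det1]
      norm_num [Matrix.vecHead, Matrix.vecTail]
      simp only [Matrix.cons_val_two, Matrix.cons_val_succ', Matrix.head_cons, Matrix.tail_cons, Matrix.vecHead, mul_zero, sub_zero, add_zero]
      rw [hab]
      exact div_mul_cancel₀ u hv
    · have hab : t / v * (u / v) = v := by field_simp; linear_combination htu
      simp only [det1]
      norm_num [Matrix.vecHead, Matrix.vecTail]
      exact hab
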